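/- Let f : ℝⁿ × ℝˡ → ℝ ∪ {±∞} be lower semicontinuous, set ϑ(y) = inf_{x ∈ ℝⁿ} f(x, y), assume ϑ is finite at ȳ, let S(y) = argmin_x f(x, y), and let (v, μ) ∈ ℝˡ × ℝ. (i) If S is inner semicompact at ȳ (w.r.t. ℝˡ) in direction v, then y* ∈ ∂ϑ(ȳ; (v, μ)) implies (0, y*) ∈ ⋃_{x̄ ∈ S(ȳ)} [ (⋃_{h : μ ∈ Df(x̄, ȳ)(h, v)} ∂f((x̄, ȳ); (h, v, μ))) ∪ (⋃_{h ∈ 𝕊 : 0 ∈ Df(x̄, ȳ)(h, 0)} ∂f((x̄, ȳ); (h, 0, 0))) ]. (ii) If there exists x̄ ∈ S(ȳ) such that S is inner calm at (ȳ, x̄) (w.r.t. ℝˡ) in direction v, then y* ∈ ∂ϑ(ȳ; (v, μ)) implies (0, y*) ∈ ⋃_{h : μ ∈ Df(x̄, ȳ)(h, v)} ∂f((x̄, ȳ); (h, v, μ)). -/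

import Mathlib

open Filter Topology Set Pointwise

noncomputable section

namespace Paper

variable {E : Type*} [NormedAddCommGroup E] [InnerProductSpace ℝ E]
variable {F : Type*} [NormedAddCommGroup F] [InnerProductSpace ℝ F]

/-- The set `V_{ρ,δ}(u)`. -/
def dirNbhdBase (u : E) (ρ δ : ℝ) : Set E :=
  {z | ‖z‖ ≤ ρ ∧ ‖‖u‖ • z - ‖z‖ • u‖ ≤ δ * ‖z‖ * ‖u‖}

/-- `V` is a directional neighborhood of the direction `u`. -/
def IsDirNbhd (V : Set E) (u : E) : Prop :=
  ∃ ρ > (0:ℝ), ∃ δ > (0:ℝ), dirNbhdBase u ρ δ ⊆ V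

/-- Tangent (contingent/Bouligand) cone to `Ω` at `x`. -/
def tangentCone (Ω : Set E) (x : E) : Set E :=
  {u | ∃ (uk : ℕ → E) (tk : ℕ → ℝ), Tendsto uk atTop (𝓝 u) ∧ (∀ k, 0 < tk k) ∧
    Tendsto tk atTop (𝓝 0) ∧ ∀ k, x + tk k • uk k ∈ Ω}

/-- Fréchet (regular) normal cone to `Ω` at `x` (empty if `x ∉ Ω`). -/
def frechetNC (Ω : Set E) (x : E) : Set E :=
  {ξ | x ∈ Ω ∧ ∀ ε > (0:ℝ), ∀ᶠ y in 𝓝[Ω] x, (inner ℝ ξ (y - x) : ℝ) ≤ ε * ‖y - x‖}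

/-- Limiting (Mordukhovich) normal cone to `Ω` at `x`. -/
def limitingNC (Ω : Set E) (x : E) : Set E :=
  {ξ | ∃ (xk ξk : ℕ → E), (∀ k, xk k ∈ Ω) ∧ Tendsto xk atTop (𝓝 x) ∧
    Tendsto ξk atTop (𝓝 ξ) ∧ ∀ k, ξk k ∈ frechetNC Ω (xk k)}

/-- Directional limiting normal cone to `Ω` at `x` in direction `u`. -/
def dirNC (Ω : Set E) (x : E) (u : E) : Set E :=
  {ξ | ∃ (tk : ℕ → ℝ) (uk ξk : ℕ → E), (∀ k, 0 < tk k) ∧ Tendsto tk atTop (𝓝 0) ∧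
    Tendsto uk atTop (𝓝 u) ∧ Tendsto ξk atTop (𝓝 ξ) ∧
    ∀ k, ξk k ∈ frechetNC Ω (x + tk k • uk k)}

/-- The product `E × F` equipped with the (Euclidean) `ℓ²`-structure. -/
abbrev P2 (E F : Type*) := WithLp 2 (E × F)

/-- Pairing constructor for `P2`. -/
def mk2 {E F : Type*} (x : E) (y : F) : P2 E F := (WithLp.equiv 2 (E × F)).symm (x, y)

/-- Graph of a single-valued mapping. -/
def graphFun (φ : E → F) : Set (P2 E F) := {p | ∃ x, p = mk2 x (φ x)}

/-- Graph of a multifunction. -/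
def graphMulti (M : E → Set F) : Set (P2 E F) := {p | ∃ x y, p = mk2 x y ∧ y ∈ M x}

/-- Graphical derivative of a single-valued mapping. -/
def gderiv (φ : E → F) (x : E) (u : E) : Set F :=
  {v | mk2 u v ∈ tangentCone (graphFun φ) (mk2 x (φ x))}

/-- Graphical derivative of a multifunction at `(x, y)`. -/
def gderivM (M : E → Set F) (x : E) (y : F) (u : E) : Set F :=
  {v | mk2 u v ∈ tangentCone (graphMulti M) (mk2 x y)}

/-- Directional limiting coderivative of a single-valued mapping:
`D*φ(x;(u,v))(η)`. -/
def dirCoderiv (φ : E → F) (x : E) (u : E) (v : F) (η : F) : Set E :=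
  {ξ | mk2 ξ (-η) ∈ dirNC (graphFun φ) (mk2 x (φ x)) (mk2 u v)}

/-- Metric subregularity of the multifunction `M` at `(x, y) ∈ Gr M` in direction `u`. -/
def DirMetrSubreg (M : E → Set F) (x : E) (y : F) (u : E) : Prop :=
  ∃ κ > (0:ℝ), ∃ V : Set E, IsDirNbhd V u ∧
    ∀ x', x' - x ∈ V → Metric.infDist x' {z | y ∈ M z} ≤ κ * Metric.infDist y (M x')

/-- Calmness of a single-valued mapping at `x` in direction `u`. -/
def DirCalm (φ : E → F) (x : E) (u : E) : Prop :=
  ∃ κ > (0:ℝ), ∃ V : Set E, IsDirNbhd V u ∧ ∀ x', x' - x ∈ V → ‖φ x' - φ x‖ ≤ κ * ‖x' - x‖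

/-- Lipschitz continuity of a single-valued mapping near `x` in direction `u`. -/
def DirLipschitz (φ : E → F) (x : E) (u : E) : Prop :=
  ∃ κ > (0:ℝ), ∃ V : Set E, IsDirNbhd V u ∧
    ∀ x₁ x₂, x₁ - x ∈ V → x₂ - x ∈ V → ‖φ x₁ - φ x₂‖ ≤ κ * ‖x₁ - x₂‖

/-- Inner semicompactness of `S` at `y` w.r.t. `Ω` in direction `v`. -/
def DirInnerSemicompact (S : F → Set E) (y : F) (Ω : Set F) (v : F) : Prop :=
  ∀ (t : ℕ → ℝ) (vk : ℕ → F), (∀ k, 0 < t k) → Tendsto t atTop (𝓝 0) →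
    Tendsto vk atTop (𝓝 v) → (∀ k, y + t k • vk k ∈ Ω) →
    ∃ (K : ℕ → ℕ) (xk : ℕ → E) (x : E), StrictMono K ∧
      (∀ k, xk k ∈ S (y + t (K k) • vk (K k))) ∧ Tendsto xk atTop (𝓝 x)

/-- Inner calmness of `S` at `(y, x) ∈ Gr S` w.r.t. `Ω` in direction `v`. -/
def DirInnerCalm (S : F → Set E) (y : F) (x : E) (Ω : Set F) (v : F) : Prop :=
  ∃ κ > (0:ℝ), ∃ V : Set F, IsDirNbhd V v ∧
    ∀ y', y' - y ∈ V → y' ∈ Ω → ∃ x' ∈ S y', ‖x - x'‖ ≤ κ * ‖y' - y‖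

/-- Epigraph of an extended-real-valued function, as a subset of `E ×₂ ℝ`. -/
def epiE (f : E → EReal) : Set (P2 E ℝ) := {p | ∃ (x : E) (α : ℝ), p = mk2 x α ∧ f x ≤ (α : EReal)}

/-- Graph of an extended-real-valued function, as a subset of `E ×₂ ℝ`. -/
def graphE (f : E → EReal) : Set (P2 E ℝ) := {p | ∃ (x : E) (α : ℝ), p = mk2 x α ∧ f x = (α : EReal)}

/-- Graphical derivative `Df(x)(h)` of an extended-real-valued function. -/
def gderivE (f : E → EReal) (x : E) (h : E) : Set ℝ :=
  {ν | mk2 h ν ∈ tangentCone (graphE f) (mk2 x (f x).toReal)}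

/-- Directional limiting subdifferential `∂f(x;(h,ν))`. -/
def dirSubdiff (f : E → EReal) (x : E) (h : E) (ν : ℝ) : Set E :=
  {ξ | mk2 ξ (-1 : ℝ) ∈ dirNC (epiE f) (mk2 x (f x).toReal) (mk2 h ν)}

/-- Directional singular limiting subdifferential `∂^∞ f(x;(h,ν))`. -/
def dirSingSubdiff (f : E → EReal) (x : E) (h : E) (ν : ℝ) : Set E :=
  {ξ | mk2 ξ (0 : ℝ) ∈ dirNC (epiE f) (mk2 x (f x).toReal) (mk2 h ν)}

/-- Fréchet (regular) subdifferential `∂̂f(x)`. -/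
def regSubdiff (f : E → EReal) (x : E) : Set E :=
  {ξ | ∀ ε > (0:ℝ), ∀ᶠ y in 𝓝 x,
    f x + ((((inner ℝ ξ (y - x) : ℝ)) - ε * ‖y - x‖ : ℝ) : EReal) ≤ f y}

/-- Analytic directional limiting subdifferential `∂ₐf(x;h)`. -/
def aDirSubdiff (f : E → EReal) (x : E) (h : E) : Set E :=
  {ξ | ∃ (t : ℕ → ℝ) (hk ξk : ℕ → E), (∀ k, 0 < t k) ∧ Tendsto t atTop (𝓝 0) ∧
    Tendsto hk atTop (𝓝 h) ∧ Tendsto ξk atTop (𝓝 ξ) ∧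
    Tendsto (fun k => f (x + t k • hk k)) atTop (𝓝 (f x)) ∧
    ∀ k, ξk k ∈ regSubdiff f (x + t k • hk k)}

/-- Domain of an extended-real-valued function. -/
def domE (f : E → EReal) : Set E := {x | f x ≠ ⊤ ∧ f x ≠ ⊥}

/-- Calmness of an extended-real-valued function at `x` in direction `h`
(understood w.r.t. its domain). -/
def DirCalmE (f : E → EReal) (x : E) (h : E) : Prop :=
  ∃ κ > (0:ℝ), ∃ V : Set E, IsDirNbhd V h ∧
    ∀ x', x' - x ∈ V → x' ∈ domE f → |(f x').toReal - (f x).toReal| ≤ κ * ‖x' - x‖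

/-- The set `N_{epi f}((x, f(x)); (h, ±∞))`; use `L = atTop` for `+∞` and `L = atBot` for `-∞`. -/
def NepiInfty (f : E → EReal) (x : E) (h : E) (L : Filter ℝ) : Set (P2 E ℝ) :=
  {q | ∃ (t νs : ℕ → ℝ) (hk : ℕ → E) (qk : ℕ → P2 E ℝ),
    (∀ k, 0 < t k) ∧ Tendsto t atTop (𝓝 0) ∧ Tendsto hk atTop (𝓝 h) ∧
    Tendsto νs atTop L ∧ Tendsto (fun k => t k * νs k) atTop (𝓝 0) ∧
    Tendsto qk atTop (𝓝 q) ∧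
    ∀ k, qk k ∈ frechetNC (epiE f) (mk2 x (f x).toReal + t k • mk2 (hk k) (νs k))}

/-- Directional differentiability: `f′(x;h) = d` as a limit over `t ↓ 0`, `h′ → h`. -/
def HasDirDeriv (f : E → EReal) (x : E) (h : E) (d : ℝ) : Prop :=
  Tendsto (fun p : ℝ × E => ((p.1⁻¹ : ℝ) : EReal) * (f (x + p.1 • p.2) - f x))
    ((𝓝[>] (0:ℝ)) ×ˢ 𝓝 h) (𝓝 (d : EReal))

abbrev Euc (n : ℕ) := EuclideanSpace ℝ (Fin n)

set_option linter.unusedSectionVars false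
set_option maxHeartbeats 1000000

lemma mk2_add (a c : E) (b d : F) : mk2 a b + mk2 c d = mk2 (a+c) (b+d) := rfl
lemma mk2_smul (t : ℝ) (a : E) (b : F) : t • mk2 a b = mk2 (t•a) (t•b) := rfl
lemma mk2_sub (a c : E) (b d : F) : mk2 a b - mk2 c d = mk2 (a-c) (b-d) := rfl
lemma mk2_fst (a : E) (b : F) : (mk2 a b).fst = a := rfl
lemma mk2_snd (a : E) (b : F) : (mk2 a b).snd = b := rfl
lemma mk2_eta (q : P2 E F) : mk2 q.fst q.snd = q := rfl

lemma inner_mk2 (a c : E) (b d : F) :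
    (inner ℝ (mk2 a b) (mk2 c d) : ℝ) = inner ℝ a c + inner ℝ b d := rfl

lemma norm_mk2_sq (a : E) (b : F) : ‖mk2 a b‖^2 = ‖a‖^2 + ‖b‖^2 := by
  simpa [mk2] using WithLp.prod_norm_sq_eq_of_L2 (mk2 a b)

lemma norm_mk2_nonneg_le (a : E) (b : F) : ‖b‖ ≤ ‖mk2 a b‖ := by
  have h := norm_mk2_sq a b
  nlinarith [norm_nonneg a, norm_nonneg b, norm_nonneg (mk2 a b), sq_nonneg (‖b‖ - ‖mk2 a b‖)]

lemma tendsto_mk2 {a : ℕ → E} {b : ℕ → F} {x : E} {y : F}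
    (ha : Tendsto a atTop (𝓝 x)) (hb : Tendsto b atTop (𝓝 y)) :
    Tendsto (fun k => mk2 (a k) (b k)) atTop (𝓝 (mk2 x y)) := by
  have : Tendsto (fun k => ((a k, b k) : E × F)) atTop (𝓝 (x, y)) := ha.prodMk_nhds hb
  exact ((WithLp.prodContinuousLinearEquiv 2 ℝ E F).symm.continuous.tendsto _).comp this

lemma tendsto_fst {q : ℕ → P2 E F} {l : P2 E F} (h : Tendsto q atTop (𝓝 l)) :
    Tendsto (fun k => (q k).fst) atTop (𝓝 l.fst) := by
  have := ((WithLp.prodContinuousLinearEquiv 2 ℝ E F).continuous.tendsto _).comp h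
  exact (continuous_fst.tendsto _).comp this

lemma tendsto_snd {q : ℕ → P2 E F} {l : P2 E F} (h : Tendsto q atTop (𝓝 l)) :
    Tendsto (fun k => (q k).snd) atTop (𝓝 l.snd) := by
  have := ((WithLp.prodContinuousLinearEquiv 2 ℝ E F).continuous.tendsto _).comp h
  exact (continuous_snd.tendsto _).comp this

section Lift
variable {n l : ℕ}

/-- Projection `P2 (P2 n l) ℝ → P2 l ℝ`. -/
def proj2 (q : P2 (P2 (Euc n) (Euc l)) ℝ) : P2 (Euc l) ℝ := mk2 q.fst.snd q.snd

lemma proj2_continuous : Continuous (proj2 (n := n) (l := l)) := by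
  have h1 := (WithLp.prodContinuousLinearEquiv 2 ℝ (P2 (Euc n) (Euc l)) ℝ).continuous
  have h2 := (WithLp.prodContinuousLinearEquiv 2 ℝ (Euc n) (Euc l)).continuous
  have h3 := (WithLp.prodContinuousLinearEquiv 2 ℝ (Euc l) ℝ).symm.continuous
  exact h3.comp (((continuous_snd.comp h2).comp (continuous_fst.comp h1)).prodMk
    (continuous_snd.comp h1))

/-- The key lift lemma: Fréchet normals to `epi θ` lift to Fréchet normals to `epi f`. -/
lemma frechet_lift (f : P2 (Euc n) (Euc l) → EReal) (θ : Euc l → EReal)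
    (hθ : θ = fun y => ⨅ x : Euc n, f (mk2 x y))
    {x : Euc n} {y : Euc l} {α : ℝ} (hx : f (mk2 x y) ≤ (α : EReal))
    {η : Euc l} {c : ℝ} (hN : mk2 η c ∈ frechetNC (epiE θ) (mk2 y α)) :
    mk2 (mk2 0 η) c ∈ frechetNC (epiE f) (mk2 (mk2 x y) α) := by
  obtain ⟨hmem, hineq⟩ := hN
  constructor
  · exact ⟨mk2 x y, α, rfl, hx⟩
  · intro ε hε
    have hmaps : MapsTo proj2 (epiE f) (epiE θ) := by
      rintro p ⟨x', α', rfl, hfa⟩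
      obtain ⟨x'', y'', rfl⟩ : ∃ a b, x' = mk2 a b := ⟨x'.fst, x'.snd, rfl⟩
      refine ⟨y'', α', rfl, ?_⟩
      rw [hθ]
      exact le_trans (iInf_le _ x'') hfa
    have hcw : Tendsto proj2 (𝓝[epiE f] (mk2 (mk2 x y) α)) (𝓝[epiE θ] (mk2 y α)) :=
      proj2_continuous.continuousWithinAt.tendsto_nhdsWithin hmaps
    filter_upwards [hcw.eventually (hineq ε hε), self_mem_nhdsWithin] with p hp hpe
    obtain ⟨x', α', rfl, hfa⟩ := hpe
    obtain ⟨x'', y'', rfl⟩ : ∃ a b, x' = mk2 a b := ⟨x'.fst, x'.snd, rfl⟩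
    have key : (inner ℝ (mk2 (mk2 0 η) c) (mk2 (mk2 x'' y'') α' - mk2 (mk2 x y) α) : ℝ)
        = inner ℝ (mk2 η c) (proj2 (mk2 (mk2 x'' y'') α') - mk2 y α) := by
      simp [mk2_sub, inner_mk2, proj2, mk2_fst, mk2_snd]
    rw [key]
    refine le_trans hp ?_
    have hnle : ‖proj2 (mk2 (mk2 x'' y'') α') - mk2 y α‖
        ≤ ‖mk2 (mk2 x'' y'') α' - mk2 (mk2 x y) α‖ := by
      simp only [proj2, mk2_fst, mk2_snd, mk2_sub]
      have h1 := norm_mk2_sq (mk2 (x''-x) (y''-y)) (α'-α)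
      have h2 := norm_mk2_sq (y''-y) (α'-α)
      have h3 := norm_mk2_sq (x''-x) (y''-y)
      nlinarith [norm_nonneg (mk2 (mk2 (x''-x) (y''-y)) (α'-α)),
        norm_nonneg (mk2 (y''-y) (α'-α)), sq_nonneg (‖x''-x‖)]
    exact mul_le_mul_of_nonneg_left hnle (le_of_lt hε)

/-- Vertical lemma: a Fréchet normal with negative last component forces `θ y = α`. -/
lemma mk2_inj {E F : Type*} {a c : E} {b d : F} (h : mk2 a b = mk2 c d) : a = c ∧ b = d :=
  ⟨congrArg (fun q : P2 E F => q.fst) h, congrArg (fun q : P2 E F => q.snd) h⟩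

lemma norm_mk2_zero_left (b : F) : ‖mk2 (0:E) b‖ = ‖b‖ :=
  WithLp.norm_toLp_snd 2 E F b

lemma vertical {g : Euc l → EReal} {y : Euc l} {α : ℝ} {η : Euc l} {c : ℝ} (hc : c < 0)
    (hN : mk2 η c ∈ frechetNC (epiE g) (mk2 y α)) : g y = (α : EReal) := by
  obtain ⟨⟨y2, α2, heq, hle⟩, hineq⟩ := hN
  obtain ⟨h1, h2⟩ := mk2_inj heq
  subst h1; subst h2
  by_contra hne
  have hlt : g y < (α : EReal) := lt_of_le_of_ne hle hne
  obtain ⟨r, hr1, hr2⟩ := EReal.exists_between_coe_real hlt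
  have hαr : (0:ℝ) < α - r := by exact_mod_cast sub_pos.2 (by exact_mod_cast hr2)
  set s : ℕ → ℝ := fun j => (α - r) / (j + 1) with hs
  have hspos : ∀ j, 0 < s j := fun j => div_pos hαr (by positivity)
  have hsle : ∀ j, s j ≤ α - r := fun j => by
    rw [hs]; exact div_le_self (le_of_lt hαr) (by exact_mod_cast Nat.le_add_left 1 j)
  have hmem' : ∀ j : ℕ, mk2 y (α - s j) ∈ epiE g := by
    intro j
    refine ⟨y, α - s j, rfl, le_trans (le_of_lt hr1) ?_⟩
    exact_mod_cast (by linarith [hsle j] : r ≤ α - s j)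
  have hst : Tendsto s atTop (𝓝 0) := by
    have := tendsto_one_div_add_atTop_nhds_zero_nat.const_mul (α - r)
    simpa [hs, div_eq_mul_inv, mul_comm, one_div] using this
  have htend : Tendsto (fun j => mk2 y (α - s j)) atTop (𝓝[epiE g] (mk2 y α)) := by
    apply tendsto_nhdsWithin_of_tendsto_nhds_of_eventually_within
    · have : Tendsto (fun j => α - s j) atTop (𝓝 (α - 0)) := tendsto_const_nhds.sub hst
      simpa using tendsto_mk2 tendsto_const_nhds this
    · exact Eventually.of_forall hmem'
  have := (htend.eventually (hineq (-c/2) (by linarith))).exists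
  obtain ⟨j, hj⟩ := this
  have hdiff : mk2 y (α - s j) - mk2 y α = mk2 (0 : Euc l) (-(s j)) := by
    rw [mk2_sub]; congr 1 <;> simp
  rw [hdiff, inner_mk2, norm_mk2_zero_left] at hj
  simp only [inner_zero_right, inner] at hj
  have hnorm : ‖-(s j)‖ = s j := by rw [norm_neg, Real.norm_eq_abs, abs_of_pos (hspos j)]
  rw [hnorm] at hj
  have : c * -(s j) ≤ -c/2 * s j := by simpa [mul_comm] using hj
  nlinarith [hspos j]

end Lift

section Core
variable {n l : ℕ}

/-- `x ∈ S y` means `f (x, y) = θ y`. -/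
lemma sval (f : P2 (Euc n) (Euc l) → EReal) (θ : Euc l → EReal)
    (hθ : θ = fun y => ⨅ x : Euc n, f (mk2 x y)) {x : Euc n} {y : Euc l}
    (hx : ∀ x' : Euc n, f (mk2 x y) ≤ f (mk2 x' y)) : f (mk2 x y) = θ y := by
  rw [hθ]
  exact le_antisymm (le_iInf hx) (iInf_le _ x)

/-- Core lemma: given exact graph points and lifted-to-be normals, conclude both
the graphical-derivative membership and the directional subdifferential membership. -/
lemma coreA (f : P2 (Euc n) (Euc l) → EReal) (θ : Euc l → EReal)
    (hθ : θ = fun y => ⨅ x : Euc n, f (mk2 x y)) (yb : Euc l) (xb : Euc n)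
    (hfval : f (mk2 xb yb) = θ yb)
    (t : ℕ → ℝ) (ht : ∀ k, 0 < t k) (ht0 : Tendsto t atTop (𝓝 0))
    (hs : ℕ → Euc n) (vs : ℕ → Euc l) (μs : ℕ → ℝ) (h : Euc n) (v' : Euc l) (μ' : ℝ)
    (hhs : Tendsto hs atTop (𝓝 h)) (hvs : Tendsto vs atTop (𝓝 v'))
    (hμs : Tendsto μs atTop (𝓝 μ'))
    (hexact : ∀ k, f (mk2 (xb + t k • hs k) (yb + t k • vs k))
      = (((θ yb).toReal + t k * μs k : ℝ) : EReal))
    (η : ℕ → Euc l) (c : ℕ → ℝ) (ystar : Euc l)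
    (hη : Tendsto η atTop (𝓝 ystar)) (hc : Tendsto c atTop (𝓝 (-1 : ℝ)))
    (hNk : ∀ k, mk2 (η k) (c k) ∈ frechetNC (epiE θ)
      (mk2 (yb + t k • vs k) ((θ yb).toReal + t k * μs k))) :
    μ' ∈ gderivE f (mk2 xb yb) (mk2 h v') ∧
      mk2 (0 : Euc n) ystar ∈ dirSubdiff f (mk2 xb yb) (mk2 h v') μ' := by
  have hto : (f (mk2 xb yb)).toReal = (θ yb).toReal := by rw [hfval]
  have hpt : ∀ k, mk2 (mk2 xb yb) (f (mk2 xb yb)).toReal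
      + t k • mk2 (mk2 (hs k) (vs k)) (μs k)
      = mk2 (mk2 (xb + t k • hs k) (yb + t k • vs k)) ((θ yb).toReal + t k * μs k) := by
    intro k
    rw [mk2_smul, mk2_smul, mk2_add, mk2_add, hto]
    rfl
  constructor
  · refine ⟨fun k => mk2 (mk2 (hs k) (vs k)) (μs k), t,
      tendsto_mk2 (tendsto_mk2 hhs hvs) hμs, ht, ht0, fun k => ?_⟩
    rw [hpt k]
    exact ⟨mk2 (xb + t k • hs k) (yb + t k • vs k), (θ yb).toReal + t k * μs k, rfl, hexact k⟩
  · refine ⟨t, fun k => mk2 (mk2 (hs k) (vs k)) (μs k),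
      fun k => mk2 (mk2 0 (η k)) (c k), ht, ht0,
      tendsto_mk2 (tendsto_mk2 hhs hvs) hμs,
      tendsto_mk2 (tendsto_mk2 tendsto_const_nhds hη) hc, fun k => ?_⟩
    rw [hpt k]
    exact frechet_lift f θ hθ (le_of_eq (hexact k)) (hNk k)

end Core

section Main
variable {n l : ℕ}

lemma mk2_ext {E F : Type*} {q r : P2 E F} (h1 : q.fst = r.fst) (h2 : q.snd = r.snd) :
    q = r := by
  have : mk2 q.fst q.snd = mk2 r.fst r.snd := by rw [h1, h2]
  simpa [mk2_eta] using this

lemma extract {θ : Euc l → EReal} {yb v : Euc l} {μ : ℝ} {ystar : Euc l}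
    (hy : ystar ∈ dirSubdiff θ yb v μ) :
    ∃ (t : ℕ → ℝ) (vk : ℕ → Euc l) (μk : ℕ → ℝ) (ηk : ℕ → Euc l) (ck : ℕ → ℝ),
      (∀ k, 0 < t k) ∧ Tendsto t atTop (𝓝 0) ∧ Tendsto vk atTop (𝓝 v) ∧
      Tendsto μk atTop (𝓝 μ) ∧ Tendsto ηk atTop (𝓝 ystar) ∧
      Tendsto ck atTop (𝓝 (-1 : ℝ)) ∧
      ∀ k, mk2 (ηk k) (ck k) ∈ frechetNC (epiE θ)
        (mk2 (yb + t k • vk k) ((θ yb).toReal + t k * μk k)) := by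
  obtain ⟨t, u, ξ, ht, ht0, hu, hξ, hF⟩ := hy
  refine ⟨t, fun k => (u k).fst, fun k => (u k).snd, fun k => (ξ k).fst, fun k => (ξ k).snd,
    ht, ht0, ?_, ?_, ?_, ?_, fun k => ?_⟩
  · simpa [mk2_fst] using tendsto_fst hu
  · simpa [mk2_snd] using tendsto_snd hu
  · simpa [mk2_fst] using tendsto_fst hξ
  · simpa [mk2_snd] using tendsto_snd hξ
  · have hpt : mk2 yb (θ yb).toReal + t k • u k
        = mk2 (yb + t k • (u k).fst) ((θ yb).toReal + t k * (u k).snd) := rfl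
    have := hF k
    rw [hpt] at this
    simpa [mk2_eta] using this

lemma limit_in_S (f : P2 (Euc n) (Euc l) → EReal) (hlsc : LowerSemicontinuous f)
    (θ : Euc l → EReal) (hθ : θ = fun y => ⨅ x : Euc n, f (mk2 x y)) (yb : Euc l)
    (hfin : θ yb ≠ ⊤ ∧ θ yb ≠ ⊥) {xbar : Euc n} (X : ℕ → Euc n) (Y : ℕ → Euc l) (α : ℕ → ℝ)
    (hX : Tendsto X atTop (𝓝 xbar)) (hY : Tendsto Y atTop (𝓝 yb))
    (hα : Tendsto α atTop (𝓝 (θ yb).toReal))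
    (hfeq : ∀ k, f (mk2 (X k) (Y k)) = ((α k : ℝ) : EReal)) :
    ∀ x' : Euc n, f (mk2 xbar yb) ≤ f (mk2 x' yb) := by
  have hcoe : ((θ yb).toReal : EReal) = θ yb := EReal.coe_toReal hfin.1 hfin.2
  have key : f (mk2 xbar yb) ≤ θ yb := by
    by_contra hcon
    push_neg at hcon
    obtain ⟨b, hb1, hb2⟩ := EReal.exists_between_coe_real hcon
    have hev1 : ∀ᶠ k in atTop, (b : EReal) < f (mk2 (X k) (Y k)) :=
      (tendsto_mk2 hX hY).eventually (hlsc (mk2 xbar yb) b hb2)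
    have hθb : (θ yb).toReal < b := by
      rw [← hcoe] at hb1; exact_mod_cast hb1
    have hev2 : ∀ᶠ k in atTop, α k < b := hα.eventually_lt_const hθb
    obtain ⟨k, h1, h2⟩ := (hev1.and hev2).exists
    rw [hfeq k] at h1
    exact absurd (EReal.coe_lt_coe_iff.1 h1) (not_lt.2 (le_of_lt h2))
  intro x'
  refine le_trans key ?_
  rw [hθ]
  exact iInf_le _ x'

lemma exists_subseq_tendsto {m : ℕ} {x : ℕ → Euc m} {C : ℝ} (hC : ∀ k, ‖x k‖ ≤ C) :
    ∃ (h0 : Euc m) (ψ : ℕ → ℕ), StrictMono ψ ∧ Tendsto (fun j => x (ψ j)) atTop (𝓝 h0) := by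
  obtain ⟨a, -, ψ, hψ, hta⟩ := tendsto_subseq_of_bounded
    (Metric.isBounded_closedBall (x := (0 : Euc m)) (r := C))
    (fun k => mem_closedBall_zero_iff.2 (hC k))
  exact ⟨a, ψ, hψ, hta⟩

end Main

section Parts
variable {n l : ℕ}

lemma partI (f : P2 (Euc n) (Euc l) → EReal) (hlsc : LowerSemicontinuous f)
    (θ : Euc l → EReal) (hθ : θ = fun y => ⨅ x : Euc n, f (mk2 x y)) (yb : Euc l)
    (hfin : θ yb ≠ ⊤ ∧ θ yb ≠ ⊥) (S : Euc l → Set (Euc n))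
    (hS : S = fun y => {x : Euc n | ∀ x' : Euc n, f (mk2 x y) ≤ f (mk2 x' y)})
    (v : Euc l) (μ : ℝ) (hisc : DirInnerSemicompact S yb univ v)
    (ystar : Euc l) (hy : ystar ∈ dirSubdiff θ yb v μ) :
    mk2 (0 : Euc n) ystar ∈ ⋃ xb ∈ S yb,
      ((⋃ h ∈ {h : Euc n | μ ∈ gderivE f (mk2 xb yb) (mk2 h v)},
          dirSubdiff f (mk2 xb yb) (mk2 h v) μ) ∪
       (⋃ h ∈ {h : Euc n | ‖h‖ = 1 ∧ (0:ℝ) ∈ gderivE f (mk2 xb yb) (mk2 h (0 : Euc l))},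
          dirSubdiff f (mk2 xb yb) (mk2 h (0 : Euc l)) 0)) := by
  obtain ⟨t, vk, μk, ηk, ck, ht, ht0, hvk, hμk, hηk, hck, hF⟩ := extract hy
  obtain ⟨K, x, xbar, hK, hxS, hx⟩ := hisc t vk ht ht0 hvk (fun k => mem_univ _)
  have hcneg : ∀ᶠ k in atTop, ck (K k) < 0 :=
    (hck.comp hK.tendsto_atTop).eventually_lt_const (by norm_num)
  obtain ⟨N, hN⟩ := eventually_atTop.1 hcneg
  have hshift : ∀ {α : Type} (g : ℕ → α) (L : Filter α), Tendsto g atTop L →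
      Tendsto (fun k => g (K (k + N))) atTop L := fun g L hg =>
    (hg.comp hK.tendsto_atTop).comp (tendsto_add_atTop_nat N)
  set θto := (θ yb).toReal with hθto
  set T : ℕ → ℝ := fun k => t (K (k + N)) with hTdef
  set V : ℕ → Euc l := fun k => vk (K (k + N)) with hVdef
  set M : ℕ → ℝ := fun k => μk (K (k + N)) with hMdef
  set H : ℕ → Euc l := fun k => ηk (K (k + N)) with hHdef
  set Cc : ℕ → ℝ := fun k => ck (K (k + N)) with hCdef
  set X : ℕ → Euc n := fun k => x (k + N) with hXdef
  have hT : ∀ k, 0 < T k := fun k => ht _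
  have hT0 : Tendsto T atTop (𝓝 0) := hshift t _ ht0
  have hV : Tendsto V atTop (𝓝 v) := hshift vk _ hvk
  have hM : Tendsto M atTop (𝓝 μ) := hshift μk _ hμk
  have hH : Tendsto H atTop (𝓝 ystar) := hshift ηk _ hηk
  have hC : Tendsto Cc atTop (𝓝 (-1 : ℝ)) := hshift ck _ hck
  have hX : Tendsto X atTop (𝓝 xbar) := hx.comp (tendsto_add_atTop_nat N)
  have hCneg : ∀ k, Cc k < 0 := fun k => hN _ (Nat.le_add_left N k)
  have hFk : ∀ k, mk2 (H k) (Cc k) ∈ frechetNC (epiE θ)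
      (mk2 (yb + T k • V k) (θto + T k * M k)) := fun k => hF _
  have hXS : ∀ k, ∀ x' : Euc n,
      f (mk2 (X k) (yb + T k • V k)) ≤ f (mk2 x' (yb + T k • V k)) := by
    intro k
    have h1 := hxS (k + N)
    rw [hS] at h1
    exact h1
  have hfeq : ∀ k, f (mk2 (X k) (yb + T k • V k)) = ((θto + T k * M k : ℝ) : EReal) := by
    intro k
    rw [sval f θ hθ (hXS k)]
    exact vertical (hCneg k) (hFk k)
  have hYt : Tendsto (fun k => yb + T k • V k) atTop (𝓝 yb) := by
    have h1 : Tendsto (fun k => T k • V k) atTop (𝓝 ((0:ℝ) • v)) := hT0.smul hV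
    rw [zero_smul] at h1
    simpa using tendsto_const_nhds.add h1
  have hαt : Tendsto (fun k => θto + T k * M k) atTop (𝓝 θto) := by
    have h1 : Tendsto (fun k => T k * M k) atTop (𝓝 (0 * μ)) := hT0.mul hM
    rw [zero_mul] at h1
    simpa using tendsto_const_nhds.add h1
  have hxbarS' := limit_in_S f hlsc θ hθ yb hfin X _ _ hX hYt hαt hfeq
  have hxbarS : xbar ∈ S yb := by rw [hS]; exact hxbarS'
  have hfval : f (mk2 xbar yb) = θ yb := sval f θ hθ hxbarS'
  set hks : ℕ → Euc n := fun k => (T k)⁻¹ • (X k - xbar) with hhks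
  have hXeq : ∀ k, xbar + T k • hks k = X k := by
    intro k
    simp only [hhks, smul_smul, mul_inv_cancel₀ (ne_of_gt (hT k)), one_smul]
    abel
  have hexact : ∀ k, f (mk2 (xbar + T k • hks k) (yb + T k • V k))
      = ((θto + T k * M k : ℝ) : EReal) := fun k => by rw [hXeq k]; exact hfeq k
  by_cases hbd : ∃ C : ℝ, ∃ᶠ k in atTop, ‖hks k‖ ≤ C
  · obtain ⟨C, hfr⟩ := hbd
    obtain ⟨φ, hφ, hφC⟩ := extraction_of_frequently_atTop hfr
    obtain ⟨h0, ψ, hψ, hh0⟩ := exists_subseq_tendsto (x := fun j => hks (φ j)) hφC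
    have hm : StrictMono (fun j => φ (ψ j)) := hφ.comp hψ
    have hcore := coreA f θ hθ yb xbar hfval (fun j => T (φ (ψ j))) (fun j => hT _)
      (hT0.comp hm.tendsto_atTop) (fun j => hks (φ (ψ j))) (fun j => V (φ (ψ j)))
      (fun j => M (φ (ψ j))) h0 v μ hh0 (hV.comp hm.tendsto_atTop) (hM.comp hm.tendsto_atTop)
      (fun j => hexact _) (fun j => H (φ (ψ j))) (fun j => Cc (φ (ψ j))) ystar
      (hH.comp hm.tendsto_atTop) (hC.comp hm.tendsto_atTop) (fun j => hFk _)
    exact mem_iUnion₂.2 ⟨xbar, hxbarS, Or.inl (mem_iUnion₂.2 ⟨h0, hcore.1, hcore.2⟩)⟩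
  · push_neg at hbd
    have htop : Tendsto (fun k => ‖hks k‖) atTop atTop := by
      refine tendsto_atTop.2 fun C => ?_
      have h1 := hbd C
      exact h1.mono fun k h => le_of_lt h
    obtain ⟨N2, hN2⟩ := eventually_atTop.1 (htop.eventually (eventually_ge_atTop 1))
    have hsh2 : ∀ {α : Type} (g : ℕ → α) (L : Filter α), Tendsto g atTop L →
        Tendsto (fun k => g (k + N2)) atTop L := fun g L hg =>
      hg.comp (tendsto_add_atTop_nat N2)
    have hge1 : ∀ k, 1 ≤ ‖hks (k + N2)‖ := fun k => hN2 _ (Nat.le_add_left N2 k)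
    have hpos : ∀ k, (0:ℝ) < ‖hks (k + N2)‖ := fun k => lt_of_lt_of_le one_pos (hge1 k)
    have hne : ∀ k, ‖hks (k + N2)‖ ≠ 0 := fun k => ne_of_gt (hpos k)
    set T' : ℕ → ℝ := fun k => T (k + N2) * ‖hks (k + N2)‖ with hT'def
    set h' : ℕ → Euc n := fun k => ‖hks (k + N2)‖⁻¹ • hks (k + N2) with hh'def
    set v' : ℕ → Euc l := fun k => ‖hks (k + N2)‖⁻¹ • V (k + N2) with hv'def
    set μ' : ℕ → ℝ := fun k => ‖hks (k + N2)‖⁻¹ * M (k + N2) with hμ'def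
    have hsc : ∀ k, T' k * ‖hks (k + N2)‖⁻¹ = T (k + N2) := fun k => by
      simp only [hT'def]; rw [mul_inv_cancel_right₀ (hne k)]
    have eqh : ∀ k, T' k • h' k = T (k + N2) • hks (k + N2) := fun k => by
      rw [hh'def, smul_smul, hsc]
    have eqv : ∀ k, T' k • v' k = T (k + N2) • V (k + N2) := fun k => by
      rw [hv'def, smul_smul, hsc]
    have eqμ : ∀ k, T' k * μ' k = T (k + N2) * M (k + N2) := fun k => by
      rw [hμ'def, ← mul_assoc, hsc]
    have hT' : ∀ k, 0 < T' k := fun k => mul_pos (hT _) (hpos k)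
    have hT'0 : Tendsto T' atTop (𝓝 0) := by
      have h2 : Tendsto (fun k => X (k + N2) - xbar) atTop (𝓝 0) := by
        have := (hsh2 X _ hX).sub (tendsto_const_nhds (x := xbar))
        simpa using this
      have h3 : Tendsto (fun k => ‖X (k + N2) - xbar‖) atTop (𝓝 0) := by
        simpa [Function.comp_def] using (continuous_norm.tendsto (0 : Euc n)).comp h2
      refine h3.congr fun k => ?_
      have e1 : X (k + N2) - xbar = T (k + N2) • hks (k + N2) := by
        rw [← hXeq (k + N2)]; abel
      rw [e1, norm_smul, Real.norm_eq_abs, abs_of_pos (hT _)]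
    have hh'1 : ∀ k, ‖h' k‖ = 1 := fun k => by
      rw [hh'def, norm_smul, norm_inv, norm_norm, inv_mul_cancel₀ (hne k)]
    obtain ⟨h0, ψ, hψ, hh0⟩ := exists_subseq_tendsto (x := h') (C := 1)
      (fun k => le_of_eq (hh'1 k))
    have hn1 : ‖h0‖ = 1 := by
      have h4 : Tendsto (fun j => ‖h' (ψ j)‖) atTop (𝓝 ‖h0‖) :=
        (continuous_norm.tendsto h0).comp hh0
      have h5 : Tendsto (fun j => ‖h' (ψ j)‖) atTop (𝓝 1) := by
        simp only [hh'1]; exact tendsto_const_nhds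
      exact tendsto_nhds_unique h4 h5
    have hinv : Tendsto (fun k => ‖hks (k + N2)‖⁻¹) atTop (𝓝 0) :=
      tendsto_inv_atTop_zero.comp (hsh2 (fun k => ‖hks k‖) _ htop)
    have hv'0 : Tendsto v' atTop (𝓝 0) := by
      have := hinv.smul (hsh2 V _ hV)
      simpa using this
    have hμ'0 : Tendsto μ' atTop (𝓝 0) := by
      have := hinv.mul (hsh2 M _ hM)
      simpa using this
    have hexact' : ∀ k, f (mk2 (xbar + T' k • h' k) (yb + T' k • v' k))
        = ((θto + T' k * μ' k : ℝ) : EReal) := fun k => by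
      rw [eqh, eqv, eqμ]; exact hexact (k + N2)
    have hFk' : ∀ k, mk2 (H (k + N2)) (Cc (k + N2)) ∈ frechetNC (epiE θ)
        (mk2 (yb + T' k • v' k) (θto + T' k * μ' k)) := fun k => by
      rw [eqv, eqμ]; exact hFk (k + N2)
    have hcore := coreA f θ hθ yb xbar hfval (fun j => T' (ψ j)) (fun j => hT' _)
      (hT'0.comp hψ.tendsto_atTop) (fun j => h' (ψ j)) (fun j => v' (ψ j))
      (fun j => μ' (ψ j)) h0 0 0 hh0 (hv'0.comp hψ.tendsto_atTop) (hμ'0.comp hψ.tendsto_atTop)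
      (fun j => hexact' _) (fun j => H (ψ j + N2)) (fun j => Cc (ψ j + N2)) ystar
      ((hsh2 H _ hH).comp hψ.tendsto_atTop) ((hsh2 Cc _ hC).comp hψ.tendsto_atTop)
      (fun j => hFk' _)
    exact mem_iUnion₂.2 ⟨xbar, hxbarS, Or.inr (mem_iUnion₂.2 ⟨h0, ⟨hn1, hcore.1⟩, hcore.2⟩)⟩

end Parts

section Part2
variable {n l : ℕ}

lemma partII (f : P2 (Euc n) (Euc l) → EReal)
    (θ : Euc l → EReal) (hθ : θ = fun y => ⨅ x : Euc n, f (mk2 x y)) (yb : Euc l)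
    (S : Euc l → Set (Euc n))
    (hS : S = fun y => {x : Euc n | ∀ x' : Euc n, f (mk2 x y) ≤ f (mk2 x' y)})
    (v : Euc l) (μ : ℝ) (xb : Euc n) (hxb : xb ∈ S yb)
    (hic : DirInnerCalm S yb xb univ v)
    (ystar : Euc l) (hy : ystar ∈ dirSubdiff θ yb v μ) :
    mk2 (0 : Euc n) ystar ∈
      ⋃ h ∈ {h : Euc n | μ ∈ gderivE f (mk2 xb yb) (mk2 h v)},
        dirSubdiff f (mk2 xb yb) (mk2 h v) μ := by
  obtain ⟨t, vk, μk, ηk, ck, ht, ht0, hvk, hμk, hηk, hck, hF⟩ := extract hy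
  obtain ⟨κ, hκ, Vn, ⟨ρ, hρ, δ, hδ, hVsub⟩, hicp⟩ := hic
  have hcneg : ∀ᶠ k in atTop, ck k < 0 := hck.eventually_lt_const (by norm_num)
  have hzV : ∀ᶠ k in atTop, t k • vk k ∈ dirNbhdBase v ρ δ := by
    have hz0 : Tendsto (fun k => t k • vk k) atTop (𝓝 0) := by
      have := ht0.smul hvk
      simpa using this
    have hev1 : ∀ᶠ k in atTop, ‖t k • vk k‖ ≤ ρ := by
      have h1 : Tendsto (fun k => ‖t k • vk k‖) atTop (𝓝 0) := by
        simpa [Function.comp_def] using (continuous_norm.tendsto (0 : Euc l)).comp hz0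
      exact (h1.eventually_lt_const hρ).mono fun k h => le_of_lt h
    have hev2 : ∀ᶠ k in atTop, ‖‖v‖ • vk k - ‖vk k‖ • v‖ ≤ δ * ‖vk k‖ * ‖v‖ := by
      by_cases hv0 : v = 0
      · refine Eventually.of_forall fun k => ?_
        simp [hv0]
      · have hnv : (0:ℝ) < ‖v‖ := norm_pos_iff.2 hv0
        have hnorm : Tendsto (fun k => ‖vk k‖) atTop (𝓝 ‖v‖) :=
          (continuous_norm.tendsto v).comp hvk
        have hL : Tendsto (fun k => ‖‖v‖ • vk k - ‖vk k‖ • v‖) atTop (𝓝 0) := by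
          have h2 : Tendsto (fun k => ‖v‖ • vk k - ‖vk k‖ • v) atTop
              (𝓝 (‖v‖ • v - ‖v‖ • v)) :=
            (tendsto_const_nhds.smul hvk).sub (hnorm.smul tendsto_const_nhds)
          rw [sub_self] at h2
          simpa [Function.comp_def] using (continuous_norm.tendsto (0 : Euc l)).comp h2
        have hR : Tendsto (fun k => δ * ‖vk k‖ * ‖v‖) atTop (𝓝 (δ * ‖v‖ * ‖v‖)) :=
          ((tendsto_const_nhds.mul hnorm)).mul tendsto_const_nhds
        exact ((hL.eventually_lt hR (by positivity))).mono fun k h => le_of_lt h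
    filter_upwards [hev1, hev2] with k h1 h2
    refine ⟨h1, ?_⟩
    have hnt : ‖t k • vk k‖ = t k * ‖vk k‖ := by
      rw [norm_smul, Real.norm_eq_abs, abs_of_pos (ht k)]
    rw [hnt]
    have e2 : ‖v‖ • (t k • vk k) - (t k * ‖vk k‖) • v = t k • (‖v‖ • vk k - ‖vk k‖ • v) := by
      rw [smul_sub, smul_comm (‖v‖) (t k), mul_smul]
    rw [e2, norm_smul, Real.norm_eq_abs, abs_of_pos (ht k)]
    calc t k * ‖‖v‖ • vk k - ‖vk k‖ • v‖ ≤ t k * (δ * ‖vk k‖ * ‖v‖) :=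
          mul_le_mul_of_nonneg_left h2 (le_of_lt (ht k))
      _ = δ * (t k * ‖vk k‖) * ‖v‖ := by ring
  obtain ⟨N, hN⟩ := eventually_atTop.1 (hcneg.and hzV)
  set θto := (θ yb).toReal with hθto
  set T : ℕ → ℝ := fun k => t (k + N) with hTdef
  set V : ℕ → Euc l := fun k => vk (k + N) with hVdef
  set M : ℕ → ℝ := fun k => μk (k + N) with hMdef
  set H : ℕ → Euc l := fun k => ηk (k + N) with hHdef
  set Cc : ℕ → ℝ := fun k => ck (k + N) with hCdef
  have hshift : ∀ {α : Type} (g : ℕ → α) (L : Filter α), Tendsto g atTop L →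
      Tendsto (fun k => g (k + N)) atTop L := fun g L hg =>
    hg.comp (tendsto_add_atTop_nat N)
  have hT : ∀ k, 0 < T k := fun k => ht _
  have hT0 : Tendsto T atTop (𝓝 0) := hshift t _ ht0
  have hV : Tendsto V atTop (𝓝 v) := hshift vk _ hvk
  have hM : Tendsto M atTop (𝓝 μ) := hshift μk _ hμk
  have hH : Tendsto H atTop (𝓝 ystar) := hshift ηk _ hηk
  have hC : Tendsto Cc atTop (𝓝 (-1 : ℝ)) := hshift ck _ hck
  have hCneg : ∀ k, Cc k < 0 := fun k => (hN _ (Nat.le_add_left N k)).1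
  have hFk : ∀ k, mk2 (H k) (Cc k) ∈ frechetNC (epiE θ)
      (mk2 (yb + T k • V k) (θto + T k * M k)) := fun k => hF _
  have hexists : ∀ k, ∃ x' ∈ S (yb + T k • V k), ‖xb - x'‖ ≤ κ * ‖(yb + T k • V k) - yb‖ := by
    intro k
    refine hicp (yb + T k • V k) ?_ (mem_univ _)
    have : (yb + T k • V k) - yb = T k • V k := by abel
    rw [this]
    exact hVsub (hN _ (Nat.le_add_left N k)).2
  choose X hXSm hXb using hexists
  have hXS : ∀ k, ∀ x' : Euc n,
      f (mk2 (X k) (yb + T k • V k)) ≤ f (mk2 x' (yb + T k • V k)) := by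
    intro k
    have h1 := hXSm k
    rw [hS] at h1
    exact h1
  have hfeq : ∀ k, f (mk2 (X k) (yb + T k • V k)) = ((θto + T k * M k : ℝ) : EReal) := by
    intro k
    rw [sval f θ hθ (hXS k)]
    exact vertical (hCneg k) (hFk k)
  set hks : ℕ → Euc n := fun k => (T k)⁻¹ • (X k - xb) with hhks
  have hXeq : ∀ k, xb + T k • hks k = X k := by
    intro k
    simp only [hhks, smul_smul, mul_inv_cancel₀ (ne_of_gt (hT k)), one_smul]
    abel
  have hexact : ∀ k, f (mk2 (xb + T k • hks k) (yb + T k • V k))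
      = ((θto + T k * M k : ℝ) : EReal) := fun k => by rw [hXeq k]; exact hfeq k
  -- bound on hks
  obtain ⟨CV, hCV⟩ := ((continuous_norm.tendsto v).comp hV).bddAbove_range
  have hCVk : ∀ k, ‖V k‖ ≤ CV := fun k => hCV (mem_range_self k)
  have hbound : ∀ k, ‖hks k‖ ≤ κ * CV := by
    intro k
    have h1 : ‖X k - xb‖ ≤ κ * (T k * ‖V k‖) := by
      have h2 := hXb k
      rw [norm_sub_rev] at h2
      have e3 : ‖(yb + T k • V k) - yb‖ = T k * ‖V k‖ := by
        have : (yb + T k • V k) - yb = T k • V k := by abel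
        rw [this, norm_smul, Real.norm_eq_abs, abs_of_pos (hT k)]
      rw [e3] at h2
      exact h2
    have h3 : ‖hks k‖ = (T k)⁻¹ * ‖X k - xb‖ := by
      simp only [hhks, norm_smul, Real.norm_eq_abs, abs_of_pos (inv_pos.2 (hT k))]
    rw [h3]
    calc (T k)⁻¹ * ‖X k - xb‖ ≤ (T k)⁻¹ * (κ * (T k * ‖V k‖)) :=
          mul_le_mul_of_nonneg_left h1 (le_of_lt (inv_pos.2 (hT k)))
      _ = κ * ‖V k‖ := by
          rw [show (T k)⁻¹ * (κ * (T k * ‖V k‖)) = κ * ‖V k‖ * ((T k)⁻¹ * T k) by ring,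
            inv_mul_cancel₀ (ne_of_gt (hT k)), mul_one]
      _ ≤ κ * CV := mul_le_mul_of_nonneg_left (hCVk k) (le_of_lt hκ)
  obtain ⟨h0, ψ, hψ, hh0⟩ := exists_subseq_tendsto (x := hks) hbound
  have hfval : f (mk2 xb yb) = θ yb := by
    rw [hS] at hxb
    exact sval f θ hθ hxb
  have hcore := coreA f θ hθ yb xb hfval (fun j => T (ψ j)) (fun j => hT _)
    (hT0.comp hψ.tendsto_atTop) (fun j => hks (ψ j)) (fun j => V (ψ j))
    (fun j => M (ψ j)) h0 v μ hh0 (hV.comp hψ.tendsto_atTop) (hM.comp hψ.tendsto_atTop)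
    (fun j => hexact _) (fun j => H (ψ j)) (fun j => Cc (ψ j)) ystar
    (hH.comp hψ.tendsto_atTop) (hC.comp hψ.tendsto_atTop) (fun j => hFk _)
  exact mem_iUnion₂.2 ⟨h0, hcore.1, hcore.2⟩

end Part2

/-- **Theorem 4.2 (directional subdifferentials of the value function).** -/
theorem dirSubdiff_value_function {n l : ℕ} (f : P2 (Euc n) (Euc l) → EReal)
    (hlsc : LowerSemicontinuous f) (θ : Euc l → EReal)
    (hθ : θ = fun y => ⨅ x : Euc n, f (mk2 x y)) (yb : Euc l)
    (hfin : θ yb ≠ ⊤ ∧ θ yb ≠ ⊥) (S : Euc l → Set (Euc n))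
    (hS : S = fun y => {x : Euc n | ∀ x' : Euc n, f (mk2 x y) ≤ f (mk2 x' y)})
    (v : Euc l) (μ : ℝ) :
    (DirInnerSemicompact S yb univ v →
      ∀ ystar ∈ dirSubdiff θ yb v μ,
        mk2 (0 : Euc n) ystar ∈ ⋃ xb ∈ S yb,
          ((⋃ h ∈ {h : Euc n | μ ∈ gderivE f (mk2 xb yb) (mk2 h v)},
              dirSubdiff f (mk2 xb yb) (mk2 h v) μ) ∪
           (⋃ h ∈ {h : Euc n | ‖h‖ = 1 ∧ (0:ℝ) ∈ gderivE f (mk2 xb yb) (mk2 h (0 : Euc l))},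
              dirSubdiff f (mk2 xb yb) (mk2 h (0 : Euc l)) 0))) ∧
    (∀ xb ∈ S yb, DirInnerCalm S yb xb univ v →
      ∀ ystar ∈ dirSubdiff θ yb v μ,
        mk2 (0 : Euc n) ystar ∈
          ⋃ h ∈ {h : Euc n | μ ∈ gderivE f (mk2 xb yb) (mk2 h v)},
            dirSubdiff f (mk2 xb yb) (mk2 h v) μ) := by
  constructor
  · intro hisc ystar hy
    exact partI f hlsc θ hθ yb hfin S hS v μ hisc ystar hy
  · intro xb hxb hic ystar hy
    exact partII f θ hθ yb S hS v μ xb hxb hic ystar hy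

end Paper
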